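/- Assume ε̃ ≥ 0 and that the uniform Hessian concentration bound holds with level ϱ > 0. Then for all x, z ∈ ℝⁿ: D_f(x,z) ≤ (3 + ε̃ + ϱ·max(‖x̄‖²/3 + ‖ε‖_∞, 1)) · D_ψ(x,z). -/
import Mathlib


open scoped RealInnerProductSpace BigOperators

noncomputable def phaseObj (m n : ℕ) (a : Fin m → EuclideanSpace ℝ (Fin n))
    (xbar : EuclideanSpace ℝ (Fin n)) (ε : Fin m → ℝ)
    (x : EuclideanSpace ℝ (Fin n)) : ℝ :=
  (1 / (4 * (m : ℝ))) * ∑ r, (⟪a r, x⟫ ^ 2 - ⟪a r, xbar⟫ ^ 2) ^ 2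
    - (1 / (2 * (m : ℝ))) * ∑ r, ε r * (⟪a r, x⟫ ^ 2 - ⟪a r, xbar⟫ ^ 2)
    + (∑ r, ε r ^ 2) / (4 * (m : ℝ))

noncomputable def phaseGrad (m n : ℕ) (a : Fin m → EuclideanSpace ℝ (Fin n))
    (xbar : EuclideanSpace ℝ (Fin n)) (ε : Fin m → ℝ)
    (x : EuclideanSpace ℝ (Fin n)) : EuclideanSpace ℝ (Fin n) :=
  (1 / (m : ℝ)) • ∑ r, ((⟪a r, x⟫ ^ 2 - ⟪a r, xbar⟫ ^ 2 - ε r) * ⟪a r, x⟫) • a r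

noncomputable def entropy (n : ℕ) (x : EuclideanSpace ℝ (Fin n)) : ℝ :=
  (1 / 4) * ‖x‖ ^ 4 + (1 / 2) * ‖x‖ ^ 2

noncomputable def entropyGrad (n : ℕ) (x : EuclideanSpace ℝ (Fin n)) :
    EuclideanSpace ℝ (Fin n) :=
  (‖x‖ ^ 2 + 1) • x

/-- Bregman divergence of the noisy phase-retrieval objective `f`. -/
noncomputable def Df (m n : ℕ) (a : Fin m → EuclideanSpace ℝ (Fin n))
    (xbar : EuclideanSpace ℝ (Fin n)) (ε : Fin m → ℝ)
    (x z : EuclideanSpace ℝ (Fin n)) : ℝ :=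
  phaseObj m n a xbar ε x - phaseObj m n a xbar ε z - ⟪phaseGrad m n a xbar ε z, x - z⟫

/-- Bregman divergence of the entropy `ψ`. -/
noncomputable def Dψ (n : ℕ) (x z : EuclideanSpace ℝ (Fin n)) : ℝ :=
  entropy n x - entropy n z - ⟪entropyGrad n z, x - z⟫


/-- The Hessian quadratic form `⟨u, ∇²f(x) u⟩` of the noisy phase-retrieval objective. -/
noncomputable def hessQuad (m n : ℕ) (a : Fin m → EuclideanSpace ℝ (Fin n))
    (xbar : EuclideanSpace ℝ (Fin n)) (ε : Fin m → ℝ)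
    (x u : EuclideanSpace ℝ (Fin n)) : ℝ :=
  (1 / (m : ℝ)) * ∑ r, (3 * ⟪a r, x⟫ ^ 2 - ⟪a r, xbar⟫ ^ 2 - ε r) * ⟪a r, u⟫ ^ 2

/-- The uniform Hessian concentration bound at level `ϱ`. -/
def HessConc (m n : ℕ) (a : Fin m → EuclideanSpace ℝ (Fin n))
    (xbar : EuclideanSpace ℝ (Fin n)) (ε : Fin m → ℝ) (ϱ : ℝ) : Prop :=
  ∀ x u : EuclideanSpace ℝ (Fin n), ‖u‖ = 1 →
    |hessQuad m n a xbar ε x u -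
        (6 * ⟪x, u⟫ ^ 2 + 3 * ‖x‖ ^ 2 - 2 * ⟪xbar, u⟫ ^ 2 - ‖xbar‖ ^ 2
          - (1 / (m : ℝ)) * ∑ r, ε r)| ≤
      ϱ * (‖x‖ ^ 2 + ‖xbar‖ ^ 2 / 3 + ⨆ s, |ε s|)


/-- Inner product with the phase-retrieval gradient, in sum form. -/
lemma inner_phaseGrad (m n : ℕ) (a : Fin m → EuclideanSpace ℝ (Fin n))
    (xbar : EuclideanSpace ℝ (Fin n)) (ε : Fin m → ℝ) (z w : EuclideanSpace ℝ (Fin n)) :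
    ⟪phaseGrad m n a xbar ε z, w⟫ =
      (1 / (m : ℝ)) * ∑ r, (⟪a r, z⟫ ^ 2 - ⟪a r, xbar⟫ ^ 2 - ε r) * ⟪a r, z⟫ * ⟪a r, w⟫ := by
  rw [phaseGrad, real_inner_smul_left, sum_inner]
  congr 1
  exact Finset.sum_congr rfl fun r _ => by rw [real_inner_smul_left]

/-- Exact two-point quadrature identity for `Df`. -/
lemma f_ident (m n : ℕ) (a : Fin m → EuclideanSpace ℝ (Fin n))
    (xbar : EuclideanSpace ℝ (Fin n)) (ε : Fin m → ℝ) (x z : EuclideanSpace ℝ (Fin n)) :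
    Df m n a xbar ε x z =
      (1 / 6) * hessQuad m n a xbar ε z (x - z)
        + (1 / 3) * hessQuad m n a xbar ε (z + (1/2 : ℝ) • (x - z)) (x - z) := by
  simp only [Df, phaseObj, hessQuad, inner_phaseGrad, inner_sub_right, inner_add_right,
    real_inner_smul_right, Finset.mul_sum, Finset.sum_div, ← Finset.sum_add_distrib,
    ← Finset.sum_sub_distrib]
  refine Finset.sum_congr rfl fun r _ => ?_
  ring

/-- Exact two-point quadrature identity for `Dψ`. -/
lemma psi_ident (n : ℕ) (x z : EuclideanSpace ℝ (Fin n)) :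
    Dψ n x z =
      (1 / 6) * (‖z‖ ^ 2 * ‖x - z‖ ^ 2 + 2 * ⟪z, x - z⟫ ^ 2 + ‖x - z‖ ^ 2)
        + (1 / 3) * (‖z + (1/2 : ℝ) • (x - z)‖ ^ 2 * ‖x - z‖ ^ 2
            + 2 * ⟪z + (1/2 : ℝ) • (x - z), x - z⟫ ^ 2 + ‖x - z‖ ^ 2) := by
  have hn : ∀ w : EuclideanSpace ℝ (Fin n), ‖w‖ ^ 2 = ⟪w, w⟫ := fun w =>
    (real_inner_self_eq_norm_sq w).symm
  have h4 : ∀ w : EuclideanSpace ℝ (Fin n), ‖w‖ ^ 4 = ⟪w, w⟫ ^ 2 := fun w => by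
    rw [real_inner_self_eq_norm_sq]; ring
  simp only [Dψ, entropy, entropyGrad, h4, hn, real_inner_smul_left, real_inner_smul_right,
    inner_sub_left, inner_sub_right, inner_add_left, inner_add_right]
  rw [real_inner_comm z x]
  ring

/-- Pointwise Hessian comparison under concentration. -/
lemma hess_comp (m n : ℕ) (a : Fin m → EuclideanSpace ℝ (Fin n))
    (xbar : EuclideanSpace ℝ (Fin n)) (ε : Fin m → ℝ)
    (hεt : 0 ≤ (1 / (m : ℝ)) * ∑ r, ε r)
    (ϱ : ℝ) (hϱ : 0 < ϱ) (hconc : HessConc m n a xbar ε ϱ)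
    (u : EuclideanSpace ℝ (Fin n)) (hu : u ≠ 0) (w : EuclideanSpace ℝ (Fin n)) :
    hessQuad m n a xbar ε w u ≤
      (3 + (1 / (m : ℝ)) * ∑ r, ε r + ϱ * max (‖xbar‖ ^ 2 / 3 + ⨆ s, |ε s|) 1)
        * (‖w‖ ^ 2 * ‖u‖ ^ 2 + 2 * ⟪w, u⟫ ^ 2 + ‖u‖ ^ 2) := by
  set E : ℝ := ⨆ s, |ε s| with hE
  set εt : ℝ := (1 / (m : ℝ)) * ∑ r, ε r with hεtd
  set c : ℝ := ‖u‖ with hc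
  have hc0 : 0 < c := norm_pos_iff.mpr hu
  have hunit : ‖c⁻¹ • u‖ = 1 := by rw [hc]; exact norm_smul_inv_norm hu
  have hconc' := hconc w (c⁻¹ • u) hunit
  have hsq : hessQuad m n a xbar ε w (c⁻¹ • u) = c⁻¹ ^ 2 * hessQuad m n a xbar ε w u := by
    simp only [hessQuad, real_inner_smul_right, mul_pow, Finset.mul_sum]
    exact Finset.sum_congr rfl fun r _ => by ring
  rw [hsq, real_inner_smul_right, real_inner_smul_right] at hconc'
  have h2 := (abs_le.mp hconc').2
  set H : ℝ := hessQuad m n a xbar ε w u with hH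
  set P : ℝ := ⟪w, u⟫ with hP
  set Q : ℝ := ⟪xbar, u⟫ with hQ
  set W : ℝ := ‖w‖ ^ 2 with hW
  set X : ℝ := ‖xbar‖ ^ 2 with hX
  have hinv2 : c⁻¹ ^ 2 * c ^ 2 = 1 := by
    field_simp
  have e1 : c ^ 2 * (c⁻¹ ^ 2 * H - (6 * (c⁻¹ * P) ^ 2 + 3 * W - 2 * (c⁻¹ * Q) ^ 2 - X - εt))
      = H - (6 * P ^ 2 + 3 * W * c ^ 2 - 2 * Q ^ 2 - X * c ^ 2 - εt * c ^ 2) := by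
    linear_combination (H - 6 * P ^ 2 + 2 * Q ^ 2) * hinv2
  have key : H - (6 * P ^ 2 + 3 * W * c ^ 2 - 2 * Q ^ 2 - X * c ^ 2 - εt * c ^ 2)
      ≤ c ^ 2 * (ϱ * (W + X / 3 + E)) := by
    rw [← e1]
    exact mul_le_mul_of_nonneg_left h2 (sq_nonneg c)
  set M : ℝ := max (X / 3 + E) 1 with hM
  have hM1 : (1 : ℝ) ≤ M := le_max_right _ _
  have hM2 : X / 3 + E ≤ M := le_max_left _ _
  have hWnn : 0 ≤ W := sq_nonneg _
  have hXnn : 0 ≤ X := sq_nonneg _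
  have hc2 : 0 < c ^ 2 := pow_pos hc0 2
  nlinarith [sq_nonneg P, sq_nonneg Q, mul_nonneg (mul_nonneg hεt hWnn) hc2.le,
    mul_nonneg (mul_nonneg (mul_nonneg hϱ.le (sub_nonneg.2 hM1)) hWnn) hc2.le,
    mul_nonneg hεt (sq_nonneg P), mul_nonneg (mul_nonneg hϱ.le (le_trans zero_le_one hM1)) (sq_nonneg P),
    mul_nonneg (mul_nonneg hϱ.le (sub_nonneg.2 hM2)) hc2.le,
    mul_nonneg hXnn hc2.le, mul_nonneg hεt hc2.le, hc2.le]

/-- relative smoothness of `f` w.r.t. `ψ` under Hessian concentration. -/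
theorem stmt11 (n m : ℕ) (hm : 1 ≤ m) (a : Fin m → EuclideanSpace ℝ (Fin n))
    (xbar : EuclideanSpace ℝ (Fin n)) (ε : Fin m → ℝ)
    (hεt : 0 ≤ (1 / (m : ℝ)) * ∑ r, ε r)
    (ϱ : ℝ) (hϱ : 0 < ϱ) (hconc : HessConc m n a xbar ε ϱ) :
    ∀ x z : EuclideanSpace ℝ (Fin n),
      Df m n a xbar ε x z ≤
        (3 + (1 / (m : ℝ)) * ∑ r, ε r
          + ϱ * max (‖xbar‖ ^ 2 / 3 + ⨆ s, |ε s|) 1) * Dψ n x z := by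
  intro x z
  by_cases hxz : x = z
  · subst hxz
    have h1 : Df m n a xbar ε x x = 0 := by simp [Df]
    have h2 : Dψ n x x = 0 := by simp [Dψ]
    rw [h1, h2, mul_zero]
  · have hu : x - z ≠ 0 := sub_ne_zero.mpr hxz
    rw [f_ident, psi_ident]
    have h0 := hess_comp m n a xbar ε hεt ϱ hϱ hconc (x - z) hu z
    have h1 := hess_comp m n a xbar ε hεt ϱ hϱ hconc (x - z) hu (z + (1/2 : ℝ) • (x - z))
    nlinarith [h0, h1]
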